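/- Let r > 0, p ≥ 1, m ∈ ℕ, let E = ℝ^m with the Euclidean inner product, K and E₁ finite-dimensional real inner product spaces, T : E → K and A : E → E₁ linear maps with A surjective, g ∈ K, f ∈ E₁, γ > 0. For every 0 ≤ ε < r, the functional J_p^ε(v) = ‖Tv − g‖² + γ ∑_{i=1}^m W_r^{p,ε}(v_i) attains its minimum on the affine space F = {v ∈ E : Av = f}: there exists v* ∈ F with J_p^ε(v*) ≤ J_p^ε(v) for all v ∈ F. -/

import Mathlib

/-- The smoothed truncated power potential `W_r^{p,ε}`: an even function equal to `|t|^p`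
for `|t| ≤ r−ε`, to the cubic interpolation `π_p(|t|)` for `r−ε ≤ |t| ≤ r+ε`, and to
`r^p` for `|t| ≥ r+ε`. For `ε = 0` it reduces to `W_r^p(t) = min {|t|^p, r^p}`. -/
noncomputable def Wpot (r p ε t : ℝ) : ℝ :=
  if |t| ≤ r - ε then |t| ^ p
  else if |t| ≤ r + ε then
    (p * (r - ε) ^ (p - 1) / (12 * ε ^ 2) +
        (p * (r - ε) ^ (p - 1) / (2 * ε) +
          3 * ((r - ε) ^ p - r ^ p) / (4 * ε ^ 2)) / (3 * ε)) *
      (|t| - (r + ε)) ^ 3 +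
    (p * (r - ε) ^ (p - 1) / (2 * ε) + 3 * ((r - ε) ^ p - r ^ p) / (4 * ε ^ 2)) *
      (|t| - (r + ε)) ^ 2 + r ^ p
  else r ^ p

open Filter Topology

lemma wpot_const (r p ε : ℝ) (hε0 : 0 ≤ ε) (hr : 0 < r) (t : ℝ) (h : r + ε ≤ |t|) :
    Wpot r p ε t = r ^ p := by
  unfold Wpot
  by_cases h1 : |t| ≤ r - ε
  · have hε : ε = 0 := le_antisymm (by linarith) hε0
    have : |t| = r := le_antisymm (by linarith) (by linarith)
    rw [if_pos h1, this]
  · rw [if_neg h1]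
    by_cases h2 : |t| ≤ r + ε
    · have : |t| = r + ε := le_antisymm h2 h
      rw [if_pos h2, this]
      ring
    · rw [if_neg h2]

lemma wpot_lb (r p ε : ℝ) (hε0 : 0 ≤ ε) (hr : 0 < r) :
    ∃ C : ℝ, 0 ≤ C ∧ ∀ t, -C ≤ Wpot r p ε t := by
  set A0 : ℝ := p * (r - ε) ^ (p - 1) / (12 * ε ^ 2) +
        (p * (r - ε) ^ (p - 1) / (2 * ε) +
          3 * ((r - ε) ^ p - r ^ p) / (4 * ε ^ 2)) / (3 * ε) with hA0
  set B : ℝ := p * (r - ε) ^ (p - 1) / (2 * ε) + 3 * ((r - ε) ^ p - r ^ p) / (4 * ε ^ 2) with hB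
  refine ⟨|A0| * (2*ε)^3 + |B| * (2*ε)^2, by positivity, fun t => ?_⟩
  unfold Wpot
  rw [← hA0, ← hB]
  by_cases h1 : |t| ≤ r - ε
  · rw [if_pos h1]
    have h2 : (0:ℝ) ≤ |t| ^ p := Real.rpow_nonneg (abs_nonneg t) p
    have : (0:ℝ) ≤ |A0| * (2*ε)^3 + |B| * (2*ε)^2 := by positivity
    linarith
  · rw [if_neg h1]
    by_cases h2 : |t| ≤ r + ε
    · rw [if_pos h2]
      push_neg at h1
      set u : ℝ := |t| - (r + ε) with hu
      have hu1 : -(2*ε) ≤ u := by simp only [hu]; linarith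
      have hu2 : u ≤ 0 := by simp only [hu]; linarith
      have habs : |u| ≤ 2*ε := abs_le.2 ⟨by linarith, by linarith⟩
      have h3 : |A0 * u^3| ≤ |A0| * (2*ε)^3 := by
        rw [abs_mul, abs_pow]
        gcongr
      have h4 : |B * u^2| ≤ |B| * (2*ε)^2 := by
        rw [abs_mul, abs_pow]
        gcongr
      have hrp : (0:ℝ) ≤ r ^ p := Real.rpow_nonneg hr.le p
      have := neg_abs_le (A0 * u^3)
      have := neg_abs_le (B * u^2)
      linarith
    · rw [if_neg h2]
      have hrp : (0:ℝ) ≤ r ^ p := Real.rpow_nonneg hr.le p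
      have : (0:ℝ) ≤ |A0| * (2*ε)^3 + |B| * (2*ε)^2 := by positivity
      linarith

lemma wpot_cont (r p ε : ℝ) (hr : 0 < r) (hp : 1 ≤ p) (hε0 : 0 ≤ ε) (hεr : ε < r) :
    Continuous (Wpot r p ε) := by
  unfold Wpot
  have habs : Continuous (fun t : ℝ => |t|) := continuous_abs
  have hpow : Continuous (fun t : ℝ => |t| ^ p) :=
    continuous_abs.rpow_const (fun x => Or.inr (by linarith))
  apply Continuous.if_le hpow ?hg habs continuous_const ?hb
  case hb =>
    intro x hx
    rw [if_pos (by rw [hx]; linarith)]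
    rw [hx]
    by_cases hε : ε = 0
    · subst hε; norm_num
    · have hεne : (ε:ℝ) ≠ 0 := hε
      rw [show r - ε - (r + ε) = -(2*ε) by ring]
      set a := (r - ε) ^ (p - 1) with ha
      set b := (r - ε) ^ p with hb
      set c := r ^ p with hc
      field_simp
      ring
  case hg =>
    apply Continuous.if_le ?hg2 continuous_const habs continuous_const ?hb2
    case hb2 =>
      intro x hx
      rw [hx]; ring
    case hg2 => fun_prop


lemma coord_le_norm {m : ℕ} (x : EuclideanSpace ℝ (Fin m)) (j : Fin m) : |x j| ≤ ‖x‖ := by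
  rw [EuclideanSpace.norm_eq]
  calc |x j| = Real.sqrt (|x j|^2) := by rw [Real.sqrt_sq_eq_abs, abs_abs]
  _ ≤ _ := Real.sqrt_le_sqrt (Finset.single_le_sum (f := fun i => |x i|^2)
      (fun i _ => sq_nonneg _) (Finset.mem_univ j))

lemma dist_ker {F : Type*} [NormedAddCommGroup F] [NormedSpace ℝ F] {m : ℕ}
    (Φ : EuclideanSpace ℝ (Fin m) →ₗ[ℝ] F) :
    ∃ C : ℝ, 0 ≤ C ∧ ∀ x, ∃ n ∈ LinearMap.ker Φ, ‖x - n‖ ≤ C * ‖Φ x‖ := by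
  set Kk := LinearMap.ker Φ with hKk
  set ρ : Kkᗮ →ₗ[ℝ] F := Φ.domRestrict Kkᗮ with hρ
  have hker : LinearMap.ker ρ = ⊥ := by
    rw [eq_bot_iff]
    rintro ⟨y, hy⟩ h
    have hyk : y ∈ Kk := h
    have : y = 0 := by
      have := (Submodule.orthogonal_disjoint Kk).le_bot (⟨hyk, hy⟩ : y ∈ Kk ⊓ Kkᗮ)
      simpa using this
    simp only [Submodule.mem_bot]
    exact Subtype.ext this
  obtain ⟨C, hC0, hC⟩ := ρ.exists_antilipschitzWith hker
  refine ⟨C, C.coe_nonneg, fun x => ?_⟩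
  refine ⟨(Kk.orthogonalProjectionOnto x : EuclideanSpace ℝ (Fin m)),
    (Kk.orthogonalProjectionOnto x).2, ?_⟩
  have hmem : x - Kk.orthogonalProjectionOnto x ∈ Kkᗮ := Kk.sub_starProjection_mem_orthogonal x
  have h2 := hC.le_mul_dist (⟨x - Kk.orthogonalProjectionOnto x, hmem⟩ : Kkᗮ) 0
  rw [map_zero, dist_zero_right, dist_zero_right] at h2
  have h3 : ρ (⟨x - Kk.orthogonalProjectionOnto x, hmem⟩ : Kkᗮ) = Φ x := by
    have : Φ ((Kk.orthogonalProjectionOnto x : EuclideanSpace ℝ (Fin m))) = 0 :=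
      (Kk.orthogonalProjectionOnto x).2
    simp [hρ, map_sub]
    exact this
  rw [h3] at h2
  simpa using h2


/-- For every `0 ≤ ε < r`, the functional
`J_p^ε(v) = ‖Tv − g‖² + γ ∑ᵢ W_r^{p,ε}(vᵢ)` attains its minimum on the affine space
`{v : Av = f}` (with `A` surjective). -/
theorem statement8 (r p : ℝ) (hr : 0 < r) (hp : 1 ≤ p) (m : ℕ)
    {K E₁ : Type*}
    [NormedAddCommGroup K] [InnerProductSpace ℝ K] [FiniteDimensional ℝ K]
    [NormedAddCommGroup E₁] [InnerProductSpace ℝ E₁] [FiniteDimensional ℝ E₁]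
    (T : EuclideanSpace ℝ (Fin m) →ₗ[ℝ] K) (A : EuclideanSpace ℝ (Fin m) →ₗ[ℝ] E₁)
    (hA : Function.Surjective A) (g : K) (f : E₁) (γ : ℝ) (hγ : 0 < γ)
    (ε : ℝ) (hε0 : 0 ≤ ε) (hεr : ε < r) :
    ∃ vstar : EuclideanSpace ℝ (Fin m), A vstar = f ∧
      ∀ v : EuclideanSpace ℝ (Fin m), A v = f →
        ‖T vstar - g‖ ^ 2 + γ * ∑ i, Wpot r p ε (vstar i) ≤
          ‖T v - g‖ ^ 2 + γ * ∑ i, Wpot r p ε (v i) := by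
  classical
  obtain ⟨C, hC0, hCW⟩ := wpot_lb r p ε hε0 hr
  have hWcont := wpot_cont r p ε hr hp hε0 hεr
  set J : EuclideanSpace ℝ (Fin m) → ℝ :=
    fun v => ‖T v - g‖ ^ 2 + γ * ∑ i, Wpot r p ε (v i) with hJ
  -- lower bound on the sum part
  have hsumlb : ∀ v : EuclideanSpace ℝ (Fin m), -(γ * (m * C)) ≤ γ * ∑ i, Wpot r p ε (v i) := by
    intro v
    have h1 : -((m : ℝ) * C) ≤ ∑ i, Wpot r p ε (v i) := by
      have h2 := Finset.sum_le_sum (s := Finset.univ) (f := fun _ : Fin m => -C)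
        (g := fun i : Fin m => Wpot r p ε (v i)) (fun i _ => hCW (v i))
      have h3 : ∑ _i : Fin m, (-C) = -((m : ℝ) * C) := by
        simp [Finset.sum_const, Finset.card_univ, mul_comm]
      linarith [h3 ▸ h2]
    nlinarith
  have hJlb : ∀ v : EuclideanSpace ℝ (Fin m), -(γ * (m * C)) ≤ J v := by
    intro v
    have := hsumlb v
    have h1 : (0:ℝ) ≤ ‖T v - g‖ ^ 2 := sq_nonneg _
    simp only [hJ]
    linarith
  set Sv : Set ℝ := J '' {v | A v = f} with hSv
  obtain ⟨v0, hv0⟩ := hA f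
  have hne : Sv.Nonempty := ⟨J v0, v0, hv0, rfl⟩
  have hbdd : BddBelow Sv := by
    refine ⟨-(γ * (m * C)), ?_⟩
    rintro x ⟨v, hv, rfl⟩
    exact hJlb v
  set μ := sInf Sv with hμ
  have hμle : ∀ v : EuclideanSpace ℝ (Fin m), A v = f → μ ≤ J v :=
    fun v hv => csInf_le hbdd ⟨v, hv, rfl⟩
  -- minimizing sequence
  have hseq : ∀ n : ℕ, ∃ v : EuclideanSpace ℝ (Fin m), A v = f ∧ J v < μ + 1 / (n + 1) := by
    intro n
    have hpos : (0:ℝ) < 1 / (n + 1) := by positivity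
    obtain ⟨x, ⟨v, hv, rfl⟩, hx⟩ := exists_lt_of_csInf_lt hne (by linarith : μ < μ + 1 / (n + 1))
    exact ⟨v, hv, hx⟩
  choose vs hvs1 hvs2 using hseq
  have hJtend : Tendsto (fun n => J (vs n)) atTop (𝓝 μ) := by
    apply tendsto_of_tendsto_of_tendsto_of_le_of_le (g := fun _ : ℕ => μ)
      (h := fun n : ℕ => μ + 1 / (n + 1)) tendsto_const_nhds ?_
      (fun n => hμle _ (hvs1 n)) (fun n => (hvs2 n).le)
    simpa using (tendsto_const_nhds (x := μ)).add tendsto_one_div_add_atTop_nhds_zero_nat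
  -- bound on ‖T (vs n)‖
  set D : ℝ := max 1 (μ + 1 + γ * (m * C)) with hD
  have hTb : ∀ n, ‖T (vs n)‖ ≤ ‖g‖ + D := by
    intro n
    have h1 : ‖T (vs n) - g‖ ^ 2 ≤ μ + 1 + γ * (m * C) := by
      have h2 := hvs2 n
      have h3 := hsumlb (vs n)
      have h4 : (1:ℝ) / (n + 1) ≤ 1 := by
        rw [div_le_one (by positivity)]
        simp
      simp only [hJ] at h2
      linarith
    have h5 : ‖T (vs n) - g‖ ≤ D := by
      rcases le_or_gt ‖T (vs n) - g‖ 1 with h | h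
      · exact h.trans (le_max_left _ _)
      · have : ‖T (vs n) - g‖ ≤ ‖T (vs n) - g‖ ^ 2 := by nlinarith
        exact (this.trans h1).trans (le_max_right _ _)
    calc ‖T (vs n)‖ = ‖T (vs n) - g + g‖ := by rw [sub_add_cancel]
    _ ≤ ‖T (vs n) - g‖ + ‖g‖ := norm_add_le _ _
    _ ≤ ‖g‖ + D := by linarith
  -- compactification
  set φ : ℝ → ℝ := fun t => t / (1 + |t|) with hφ
  have hφlt : ∀ t, |φ t| < 1 := by
    intro t
    rw [hφ]
    simp only
    rw [abs_div, abs_of_pos (by positivity : (0:ℝ) < 1 + |t|), div_lt_one (by positivity)]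
    linarith [abs_nonneg t]
  have hφinv : ∀ t : ℝ, φ t / (1 - |φ t|) = t := by
    intro t
    have h1 : |φ t| = |t| / (1 + |t|) := by
      rw [hφ]
      simp only
      rw [abs_div, abs_of_pos (by positivity : (0:ℝ) < 1 + |t|)]
    rw [h1, hφ]
    simp only
    have h2 : (0:ℝ) < 1 + |t| := by positivity
    field_simp
    ring
  set z : ℕ → K × (Fin m → ℝ) := fun n => (T (vs n), fun j => φ (vs n j)) with hz
  set R : ℝ := max (‖g‖ + D) 1 with hR
  have hzb : ∀ n, z n ∈ Metric.closedBall (0 : K × (Fin m → ℝ)) R := by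
    intro n
    rw [Metric.mem_closedBall, dist_zero_right, Prod.norm_def]
    apply max_le
    · exact (hTb n).trans (le_max_left _ _)
    · refine le_trans ?_ (le_max_right (‖g‖ + D) 1)
      apply pi_norm_le_iff_of_nonneg zero_le_one |>.2
      intro j
      rw [Real.norm_eq_abs]
      exact (hφlt _).le
  obtain ⟨⟨ybar, sbar⟩, -, σ, hσ, hzt⟩ :=
    tendsto_subseq_of_bounded Metric.isBounded_closedBall hzb
  have hyt : Tendsto (fun n => T (vs (σ n))) atTop (𝓝 ybar) :=
    (continuous_fst.tendsto _).comp hzt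
  have hst : ∀ j, Tendsto (fun n => φ (vs (σ n) j)) atTop (𝓝 (sbar j)) := by
    intro j
    have h1 : Tendsto (fun n => (z (σ n)).2) atTop (𝓝 sbar) := (continuous_snd.tendsto _).comp hzt
    exact (tendsto_pi_nhds.1 h1) j
  have hsb1 : ∀ j, |sbar j| ≤ 1 := by
    intro j
    apply le_of_tendsto (hst j).abs
    exact Eventually.of_forall fun n => (hφlt _).le
  set S : Finset (Fin m) := Finset.univ.filter (fun j => 1 ≤ |sbar j|) with hS
  set xbarf : Fin m → ℝ := fun j => sbar j / (1 - |sbar j|) with hxbarf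
  have hcoord : ∀ j ∉ S, Tendsto (fun n => vs (σ n) j) atTop (𝓝 (xbarf j)) := by
    intro j hj
    have hlt : |sbar j| < 1 := by
      by_contra h
      exact hj (Finset.mem_filter.2 ⟨Finset.mem_univ _, not_lt.1 h⟩)
    have hψ : ContinuousAt (fun s : ℝ => s / (1 - |s|)) (sbar j) := by
      apply ContinuousAt.div continuousAt_id
        ((continuous_const.sub continuous_abs).continuousAt)
      intro h
      rw [Pi.sub_apply, sub_eq_zero] at h
      exact absurd h.symm hlt.ne
    have := hψ.tendsto.comp (hst j)
    apply this.congr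
    intro n
    exact hφinv _
  have hev1 : ∀ j ∈ S, ∀ᶠ n in atTop, r + ε + 1 ≤ |vs (σ n) j| := by
    intro j hj
    have hsb : |sbar j| = 1 :=
      le_antisymm (hsb1 j) ((Finset.mem_filter.1 hj).2)
    set q : ℝ := (r + ε + 1) / (r + ε + 2) with hq
    have hq1 : q < 1 := by
      rw [hq, div_lt_one (by linarith)]
      linarith
    have h1 : Tendsto (fun n => |φ (vs (σ n) j)|) atTop (𝓝 1) := by
      have := (hst j).abs
      rwa [hsb] at this
    filter_upwards [h1.eventually (eventually_gt_nhds hq1)] with n hn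
    have ht : q < |vs (σ n) j| / (1 + |vs (σ n) j|) := by
      have : |φ (vs (σ n) j)| = |vs (σ n) j| / (1 + |vs (σ n) j|) := by
        rw [hφ]; simp only
        rw [abs_div, abs_of_pos (by positivity : (0:ℝ) < 1 + |vs (σ n) j|)]
      rwa [this] at hn
    have h2 : (0:ℝ) < 1 + |vs (σ n) j| := by positivity
    have h3 : q * (1 + |vs (σ n) j|) < |vs (σ n) j| := by
      rwa [← lt_div_iff₀ h2]
    have h4 : (0:ℝ) < r + ε + 2 := by linarith
    rw [hq] at h3
    rw [div_mul_eq_mul_div, div_lt_iff₀ h4] at h3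
    nlinarith [abs_nonneg (vs (σ n) j)]
  -- limit of J along the subsequence
  set V : ℝ := ‖ybar - g‖ ^ 2 + γ * ∑ j, (if j ∈ S then r ^ p else Wpot r p ε (xbarf j)) with hV
  have hJV : Tendsto (fun n => J (vs (σ n))) atTop (𝓝 V) := by
    apply Tendsto.add
    · exact ((hyt.sub tendsto_const_nhds).norm).pow 2
    · apply Tendsto.const_mul
      apply tendsto_finset_sum
      intro j _
      by_cases hj : j ∈ S
      · rw [if_pos hj]
        apply tendsto_nhds_of_eventually_eq
        filter_upwards [hev1 j hj] with n hn
        exact wpot_const r p ε hε0 hr _ (by linarith)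
      · rw [if_neg hj]
        exact (hWcont.continuousAt.tendsto).comp (hcoord j hj)
  have hμV : V = μ := tendsto_nhds_unique hJV (hJtend.comp (hσ.tendsto_atTop))
  -- the projection linear map
  set P : EuclideanSpace ℝ (Fin m) →ₗ[ℝ] EuclideanSpace ℝ (Fin m) :=
    { toFun := fun v => WithLp.toLp 2 (fun j => if j ∈ S then 0 else v j)
      map_add' := by
        intro x y
        ext j
        by_cases hj : j ∈ S <;> simp [hj, PiLp.add_apply]
      map_smul' := by
        intro c x
        ext j
        by_cases hj : j ∈ S <;> simp [hj, PiLp.smul_apply] } with hP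
  have hPapply : ∀ (v : EuclideanSpace ℝ (Fin m)) (j : Fin m),
      P v j = if j ∈ S then 0 else v j := fun v j => rfl
  set Φ : EuclideanSpace ℝ (Fin m) →ₗ[ℝ] E₁ × (K × EuclideanSpace ℝ (Fin m)) :=
    A.prod (T.prod P) with hΦ
  set xb : EuclideanSpace ℝ (Fin m) :=
    WithLp.toLp 2 (fun j => if j ∈ S then 0 else xbarf j) with hxb
  set zb : E₁ × (K × EuclideanSpace ℝ (Fin m)) := (f, ybar, xb) with hzb2
  have hΦt : Tendsto (fun n => Φ (vs (σ n))) atTop (𝓝 zb) := by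
    rw [hΦ, hzb2]
    simp only [LinearMap.prod_apply, Pi.prod]
    apply Tendsto.prodMk_nhds
    · have hconst : (fun n => A (vs (σ n))) = fun _ => f := funext fun n => hvs1 (σ n)
      rw [hconst]
      exact tendsto_const_nhds
    apply Tendsto.prodMk_nhds hyt
    · have hpi : Tendsto (fun n => (fun j => if j ∈ S then 0 else vs (σ n) j : Fin m → ℝ))
          atTop (𝓝 (fun j => if j ∈ S then 0 else xbarf j)) := by
        apply tendsto_pi_nhds.2
        intro j
        by_cases hj : j ∈ S
        · simp only [hj, if_true]
          exact tendsto_const_nhds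
        · simp only [hj, if_false]
          exact hcoord j hj
      have h2 := ((EuclideanSpace.equiv (Fin m) ℝ).symm.continuous.tendsto _).comp hpi
      exact h2
  have hrange : zb ∈ LinearMap.range Φ := by
    have hcl : IsClosed (LinearMap.range Φ : Set (E₁ × (K × EuclideanSpace ℝ (Fin m)))) :=
      Submodule.closed_of_finiteDimensional _
    have hmem : zb ∈ closure (LinearMap.range Φ : Set (E₁ × (K × EuclideanSpace ℝ (Fin m)))) :=
      mem_closure_of_tendsto hΦt (Eventually.of_forall fun n => ⟨vs (σ n), rfl⟩)
    rwa [hcl.closure_eq] at hmem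
  obtain ⟨u, hu⟩ := hrange
  obtain ⟨Cd, hCd0, hCd⟩ := dist_ker Φ
  have hw : ∀ n : ℕ, ∃ w : EuclideanSpace ℝ (Fin m),
      Φ w = zb ∧ ‖w - vs (σ n)‖ ≤ Cd * ‖Φ (vs (σ n)) - zb‖ := by
    intro n
    obtain ⟨nk, hnk, hle⟩ := hCd (vs (σ n) - u)
    refine ⟨u + nk, ?_, ?_⟩
    · have h0 : Φ nk = 0 := hnk
      rw [map_add, h0, add_zero, hu]
    · have h1 : u + nk - vs (σ n) = -(vs (σ n) - u - nk) := by abel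
      rw [h1, norm_neg]
      have h2 : Φ (vs (σ n) - u) = Φ (vs (σ n)) - zb := by rw [map_sub, hu]
      rw [h2] at hle
      exact hle
  choose w hw1 hw2 using hw
  have hwt : Tendsto (fun n => ‖w n - vs (σ n)‖) atTop (𝓝 0) := by
    have h1 : Tendsto (fun n => Cd * ‖Φ (vs (σ n)) - zb‖) atTop (𝓝 (Cd * 0)) := by
      apply Tendsto.const_mul
      have := (hΦt.sub (tendsto_const_nhds (x := zb))).norm
      simpa using this
    rw [mul_zero] at h1
    apply squeeze_zero (fun n => norm_nonneg _) (fun n => hw2 n) h1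
  have hev : ∀ᶠ n in atTop, (∀ j ∈ S, r + ε + 1 ≤ |vs (σ n) j|) ∧ ‖w n - vs (σ n)‖ ≤ 1 := by
    apply Eventually.and
    · exact (Finset.eventually_all S).2 hev1
    · exact hwt.eventually (eventually_le_nhds one_pos)
  obtain ⟨N, hN1, hN2⟩ := hev.exists
  -- properties of w N
  have hΦwN := hw1 N
  rw [hΦ, hzb2] at hΦwN
  have hAw : A (w N) = f := congrArg Prod.fst hΦwN
  have hTw : T (w N) = ybar := congrArg (fun z => z.2.1) hΦwN
  have hPw : P (w N) = xb := congrArg (fun z => z.2.2) hΦwN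
  have hwcoord : ∀ j ∉ S, w N j = xbarf j := by
    intro j hj
    have := congrArg (fun (x : EuclideanSpace ℝ (Fin m)) => x j) hPw
    simp only [hPapply, hxb, hj, if_neg hj] at this
    exact this
  have hwbig : ∀ j ∈ S, r + ε ≤ |w N j| := by
    intro j hj
    have h1 := hN1 j hj
    have h2 : |(w N - vs (σ N)) j| ≤ 1 := (coord_le_norm _ j).trans hN2
    have h3 : (w N - vs (σ N)) j = w N j - vs (σ N) j := rfl
    rw [h3] at h2
    have h4 := abs_sub_abs_le_abs_sub (vs (σ N) j) (w N j)
    rw [abs_sub_comm] at h4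
    linarith
  -- conclusion
  refine ⟨w N, hAw, fun v hv => ?_⟩
  have hJwN : J (w N) = V := by
    simp only [hJ, hV, hTw]
    congr 1
    congr 1
    apply Finset.sum_congr rfl
    intro j _
    by_cases hj : j ∈ S
    · rw [if_pos hj]
      exact wpot_const r p ε hε0 hr _ (hwbig j hj)
    · rw [if_neg hj, hwcoord j hj]
  have : J (w N) ≤ J v := by
    rw [hJwN, hμV]
    exact hμle v hv
  exact this
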